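/- Let R be a right Noetherian, right fully bounded ring and q a prime ideal of R. If W is a q-critical cyclic right R-module with annihilator q (so W is a fully faithful R/q-module), then W is C(q)-torsion-free: w·c ≠ 0 for every nonzero w ∈ W and every c ∈ C(q). -/

import Mathlib

open MulOpposite
universe u

/-- Gabriel–Rentschler deviation: `DevLE α P` means the deviation of the
poset `P` is at most `α`. -/
def DevLE : Ordinal.{u} → (P : Type u) → [inst : PartialOrder P] → Prop :=
  fun α P _ =>
    ∀ f : ℕ → P, (∀ n, f (n + 1) ≤ f n) →
      ∃ N : ℕ, ∀ n, N ≤ n →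
        f (n + 1) = f n ∨ ∃ β, ∃ _ : β < α, DevLE β (Set.Icc (f (n + 1)) (f n))
termination_by α => α

/-- Right ideals of `R`, as submodules of `R` viewed as a right module. -/
abbrev RightIdeal (R : Type u) [Ring R] : Type u := Submodule Rᵐᵒᵖ R

/-- Gabriel–Rentschler Krull dimension of a right `R`-module `M`
(least `α` bounding the deviation of the submodule lattice; junk value `0`
if no such ordinal exists). -/
noncomputable def rKdim (R : Type u) [Ring R] (M : Type u) [AddCommGroup M]
    [Module Rᵐᵒᵖ M] : Ordinal.{u} :=
  sInf {α : Ordinal.{u} | DevLE α (Submodule Rᵐᵒᵖ M)}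

/-- `x⁻¹(I) = {a | x * a ∈ I}`, a right ideal. -/
def preIdeal {R : Type u} [Ring R] (x : R) (I : RightIdeal R) : RightIdeal R where
  carrier := {a : R | x * a ∈ I}
  add_mem' := by intro a b ha hb; simpa [mul_add] using add_mem ha hb
  zero_mem' := by simp
  smul_mem' := by
    intro r a ha
    show x * (op (unop r) • a) ∈ I
    rw [op_smul_eq_mul, ← mul_assoc]
    exact I.smul_mem r ha

/-- `S` is a right Ore set. -/
def RightOre {R : Type u} [Ring R] (S : Set R) : Prop :=
  ∀ r : R, ∀ s ∈ S, ∃ r' : R, ∃ s' ∈ S, r * s' = s * r'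

/-- A multiplicatively closed set. -/
def MulClosed {R : Type u} [Ring R] (S : Set R) : Prop :=
  ∀ a ∈ S, ∀ b ∈ S, a * b ∈ S

/-- A Gabriel filter of right ideals. -/
def IsGabrielFilter {R : Type u} [Ring R] (F : Set (RightIdeal R)) : Prop :=
  (∀ I ∈ F, ∀ J : RightIdeal R, I ≤ J → J ∈ F) ∧
  (∀ I ∈ F, ∀ J ∈ F, I ⊓ J ∈ F) ∧
  (∀ I ∈ F, ∀ x : R, preIdeal x I ∈ F)

/-- A right ideal that is two-sided. -/
def TwoSided {R : Type u} [Ring R] (I : RightIdeal R) : Prop :=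
  ∀ r : R, ∀ x ∈ I, r * x ∈ I

/-- A (two-sided) prime ideal of a possibly noncommutative ring. -/
def IsPrimeIdeal {R : Type u} [Ring R] (p : RightIdeal R) : Prop :=
  TwoSided p ∧ p ≠ ⊤ ∧ ∀ a b : R, (∀ r : R, a * r * b ∈ p) → a ∈ p ∨ b ∈ p

/-- `C(p)`: the elements of `R` regular modulo `p`. -/
def CMod {R : Type u} [Ring R] (p : RightIdeal R) : Set R :=
  {c : R | (∀ a : R, c * a ∈ p → a ∈ p) ∧ (∀ a : R, a * c ∈ p → a ∈ p)}

/-- A prime ring. -/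
def IsPrimeRing (R : Type u) [Ring R] : Prop :=
  ∀ a b : R, (∀ r : R, a * r * b = 0) → a = 0 ∨ b = 0

/-- A right module is `V`-torsion. -/
def IsTorsionBy' {R : Type u} [Ring R] (V : Set R) (M : Type u) [AddCommGroup M]
    [Module Rᵐᵒᵖ M] : Prop :=
  ∀ x : M, ∃ v ∈ V, op v • x = 0

/-- The annihilator (as a set) of a right module. -/
def annSet (R : Type u) [Ring R] (M : Type u) [AddCommGroup M] [Module Rᵐᵒᵖ M] :
    Set R :=
  {a : R | ∀ x : M, op a • x = 0}

/-- `R` is right fully bounded: in every prime factor, every essential right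
ideal contains a nonzero two-sided ideal. -/
def RightFullyBounded (R : Type u) [Ring R] : Prop :=
  ∀ p : RightIdeal R, IsPrimeIdeal p →
    ∀ I : RightIdeal R, p ≤ I →
      (∀ J : RightIdeal R, p < J → p < I ⊓ J) →
      ∃ A : RightIdeal R, TwoSided A ∧ p < A ∧ A ≤ I

/-- A uniform right module: any two nonzero submodules intersect nontrivially. -/
def IsUniformMod (R : Type u) [Ring R] (M : Type u) [AddCommGroup M]
    [Module Rᵐᵒᵖ M] : Prop :=
  ∀ N N' : Submodule Rᵐᵒᵖ M, N ≠ ⊥ → N' ≠ ⊥ → N ⊓ N' ≠ ⊥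

/-- The annihilator (as a set of elements of `R`) of a submodule. -/
def annSubSet (R : Type u) [Ring R] {M : Type u} [AddCommGroup M]
    [Module Rᵐᵒᵖ M] (N : Submodule Rᵐᵒᵖ M) : Set R :=
  {a : R | ∀ x ∈ N, op a • x = 0}

/-- `q` is an associated (assassinator) prime of the right module `M`:
`q` is prime and is the annihilator of a nonzero submodule all of whose
nonzero submodules also have annihilator `q`. -/
def IsAssocPrime (R : Type u) [Ring R] (q : RightIdeal R) (M : Type u)
    [AddCommGroup M] [Module Rᵐᵒᵖ M] : Prop :=
  IsPrimeIdeal q ∧ ∃ N : Submodule Rᵐᵒᵖ M, N ≠ ⊥ ∧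
    ∀ N' : Submodule Rᵐᵒᵖ M, N' ≤ N → N' ≠ ⊥ → annSubSet R N' = (q : Set R)

/-- A critical right module: nonzero, and every proper quotient has strictly
smaller Krull dimension. -/
def IsCriticalMod (R : Type u) [Ring R] (M : Type u) [AddCommGroup M]
    [Module Rᵐᵒᵖ M] : Prop :=
  Nontrivial M ∧
    ∀ N : Submodule Rᵐᵒᵖ M, N ≠ ⊥ → rKdim R (M ⧸ N) < rKdim R M

/-- `M` is a fully faithful right `R/q`-module: `q` annihilates `M` and every
nonzero submodule of `M` has annihilator exactly `q`. -/
def FullyFaithfulOver (R : Type u) [Ring R] (q : RightIdeal R) (M : Type u)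
    [AddCommGroup M] [Module Rᵐᵒᵖ M] : Prop :=
  (q : Set R) ⊆ annSet R M ∧
    ∀ N : Submodule Rᵐᵒᵖ M, N ≠ ⊥ → annSubSet R N = (q : Set R)


/- ### Auxiliary lemmas ### -/
theorem DevLE_iff (α : Ordinal.{u}) (P : Type u) [PartialOrder P] :
    DevLE α P ↔ ∀ f : ℕ → P, (∀ n, f (n + 1) ≤ f n) →
      ∃ N : ℕ, ∀ n, N ≤ n →
        f (n + 1) = f n ∨ ∃ β, ∃ _ : β < α, DevLE β (Set.Icc (f (n + 1)) (f n)) := by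
  rw [DevLE]

theorem devle_of_subsingleton (α : Ordinal.{u}) (P : Type u) [PartialOrder P]
    (h : Subsingleton P) : DevLE α P := by
  rw [DevLE_iff]
  intro f _
  exact ⟨0, fun n _ => Or.inl (Subsingleton.elim _ _)⟩

theorem devle_mono {α α' : Ordinal.{u}} (h : α ≤ α') {P : Type u} [PartialOrder P]
    (hP : DevLE α P) : DevLE α' P := by
  rw [DevLE_iff] at hP ⊢
  intro f hf
  obtain ⟨N, hN⟩ := hP f hf
  refine ⟨N, fun n hn => ?_⟩
  rcases hN n hn with h1 | ⟨β, hβ, hd⟩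
  · exact Or.inl h1
  · exact Or.inr ⟨β, lt_of_lt_of_le hβ h, hd⟩

/-- Transfer of deviation bounds along a monotone order-reflecting-on-≤ map. -/
theorem devle_transfer (α : Ordinal.{u}) :
    ∀ {P Q : Type u} [PartialOrder P] [PartialOrder Q] (f : P → Q),
      Monotone f → (∀ x y : P, x ≤ y → f x = f y → x = y) → DevLE α Q → DevLE α P := by
  induction α using Ordinal.induction with
  | h α IH =>
    intro P Q _ _ f hm hr hQ
    rw [DevLE_iff] at hQ ⊢
    intro g hg
    obtain ⟨N, hN⟩ := hQ (fun n => f (g n)) (fun n => hm (hg n))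
    refine ⟨N, fun n hn => ?_⟩
    rcases hN n hn with h1 | ⟨β, hβ, hd⟩
    · exact Or.inl (hr _ _ (hg n) h1)
    · refine Or.inr ⟨β, hβ, ?_⟩
      refine IH β hβ (fun x : Set.Icc (g (n+1)) (g n) =>
        (⟨f x.1, hm x.2.1, hm x.2.2⟩ : Set.Icc (f (g (n+1))) (f (g n)))) ?_ ?_ hd
      · intro x y hxy; exact hm hxy
      · intro x y hxy hfe
        exact Subtype.ext (hr _ _ hxy (congrArg Subtype.val hfe))

theorem devle_prod (α : Ordinal.{u}) :
    ∀ {P Q : Type u} [PartialOrder P] [PartialOrder Q],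
      DevLE α P → DevLE α Q → DevLE α (P × Q) := by
  induction α using Ordinal.induction with
  | h α IH =>
    intro P Q _ _ hP hQ
    rw [DevLE_iff] at hP hQ ⊢
    intro g hg
    obtain ⟨N₁, hN₁⟩ := hP (fun n => (g n).1) (fun n => (hg n).1)
    obtain ⟨N₂, hN₂⟩ := hQ (fun n => (g n).2) (fun n => (hg n).2)
    refine ⟨max N₁ N₂, fun n hn => ?_⟩
    have h1 := hN₁ n (le_trans (le_max_left _ _) hn)
    have h2 := hN₂ n (le_trans (le_max_right _ _) hn)
    -- helper to finish in the "small interval" case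
    have key : ∀ β : Ordinal.{u}, β < α →
        DevLE β (Set.Icc (g (n+1)).1 (g n).1) → DevLE β (Set.Icc (g (n+1)).2 (g n).2) →
        DevLE β (Set.Icc (g (n+1)) (g n)) := by
      intro β hβ hd1 hd2
      have hprod := IH β hβ hd1 hd2
      refine devle_transfer β (fun x : Set.Icc (g (n+1)) (g n) =>
        ((⟨x.1.1, x.2.1.1, x.2.2.1⟩, ⟨x.1.2, x.2.1.2, x.2.2.2⟩) :
          Set.Icc (g (n+1)).1 (g n).1 × Set.Icc (g (n+1)).2 (g n).2)) ?_ ?_ hprod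
      · intro x y hxy; exact ⟨hxy.1, hxy.2⟩
      · intro x y _ he
        apply Subtype.ext
        have e1 := congrArg (fun z => (Subtype.val z.1)) he
        have e2 := congrArg (fun z => (Subtype.val z.2)) he
        exact Prod.ext e1 e2
    rcases h1 with e1 | ⟨β₁, hβ₁, hd₁⟩
    · rcases h2 with e2 | ⟨β₂, hβ₂, hd₂⟩
      · exact Or.inl (Prod.ext e1 e2)
      · refine Or.inr ⟨β₂, hβ₂, key β₂ hβ₂ ?_ hd₂⟩
        refine devle_of_subsingleton _ _ ⟨fun x y => Subtype.ext ?_⟩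
        have hx : x.1 = (g (n+1)).1 := le_antisymm (le_of_le_of_eq x.2.2 e1.symm) x.2.1
        have hy : y.1 = (g (n+1)).1 := le_antisymm (le_of_le_of_eq y.2.2 e1.symm) y.2.1
        exact hx.trans hy.symm
    · rcases h2 with e2 | ⟨β₂, hβ₂, hd₂⟩
      · refine Or.inr ⟨β₁, hβ₁, key β₁ hβ₁ hd₁ ?_⟩
        refine devle_of_subsingleton _ _ ⟨fun x y => Subtype.ext ?_⟩
        have hx : x.1 = (g (n+1)).2 := le_antisymm (le_of_le_of_eq x.2.2 e2.symm) x.2.1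
        have hy : y.1 = (g (n+1)).2 := le_antisymm (le_of_le_of_eq y.2.2 e2.symm) y.2.1
        exact hx.trans hy.symm
      · refine Or.inr ⟨max β₁ β₂, max_lt hβ₁ hβ₂,
          key _ (max_lt hβ₁ hβ₂) (devle_mono (le_max_left _ _) hd₁)
            (devle_mono (le_max_right _ _) hd₂)⟩

theorem devle_quot_transfer {A : Type u} [Ring A] {M M' : Type u} [AddCommGroup M]
    [Module A M] [AddCommGroup M'] [Module A M'] (π : M →ₗ[A] M')
    (hπ : Function.Surjective π) {α : Ordinal.{u}}
    (h : DevLE α (Submodule A M)) : DevLE α (Submodule A M') := by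
  refine devle_transfer α (Submodule.comap π) (fun x y hxy => Submodule.comap_mono hxy)
    ?_ h
  intro x y _ he
  exact Submodule.comap_injective_of_surjective hπ he

theorem devle_equiv_transfer {A : Type u} [Ring A] {M M' : Type u} [AddCommGroup M]
    [Module A M] [AddCommGroup M'] [Module A M'] (e : M ≃ₗ[A] M') {α : Ordinal.{u}}
    (h : DevLE α (Submodule A M)) : DevLE α (Submodule A M') :=
  devle_quot_transfer e.toLinearMap e.surjective h

theorem devle_exact {A : Type u} [Ring A] {M : Type u} [AddCommGroup M] [Module A M]
    (N : Submodule A M) {α : Ordinal.{u}}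
    (h1 : DevLE α (Submodule A N)) (h2 : DevLE α (Submodule A (M ⧸ N))) :
    DevLE α (Submodule A M) := by
  refine devle_transfer α
    (fun C : Submodule A M => (Submodule.comap N.subtype C, Submodule.map N.mkQ C))
    ?_ ?_ (devle_prod α h1 h2)
  · intro x y hxy
    exact ⟨Submodule.comap_mono hxy, Submodule.map_mono hxy⟩
  · intro x y hxy he
    have e1 : Submodule.comap N.subtype x = Submodule.comap N.subtype y :=
      congrArg Prod.fst he
    have e2 : Submodule.map N.mkQ x = Submodule.map N.mkQ y := congrArg Prod.snd he
    have einf : N ⊓ x = N ⊓ y := by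
      rw [← Submodule.map_comap_subtype, ← Submodule.map_comap_subtype, e1]
    have esup : x ⊔ N = y ⊔ N := by
      have := congrArg (Submodule.comap N.mkQ) e2
      rwa [Submodule.comap_map_eq, Submodule.comap_map_eq, Submodule.ker_mkQ] at this
    refine eq_of_le_of_inf_le_of_sup_le (z := N) hxy ?_ ?_
    · rw [inf_comm y N, ← einf, inf_comm]
    · rw [esup]


/-- Right multiplication-by-module-element map `a ↦ w · a` as an `Rᵐᵒᵖ`-linear map. -/
def rmulMap {R : Type u} [Ring R] {W : Type u} [AddCommGroup W] [Module Rᵐᵒᵖ W]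
    (w : W) : R →ₗ[Rᵐᵒᵖ] W where
  toFun a := op a • w
  map_add' a b := by show op (a + b) • w = _; rw [op_add, add_smul]
  map_smul' s a := by
    show op (s • a) • w = s • (op a • w)
    conv_lhs => rw [← op_unop s, op_smul_eq_mul]
    rw [op_mul, op_unop, mul_smul]

/-- Left multiplication by `x` as an `Rᵐᵒᵖ`-linear endomap of `R`. -/
def lmulMap {R : Type u} [Ring R] (x : R) : R →ₗ[Rᵐᵒᵖ] R where
  toFun a := x * a
  map_add' a b := mul_add x a b
  map_smul' s a := by
    show x * (s • a) = s • (x * a)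
    conv_lhs => rw [← op_unop s, op_smul_eq_mul]
    conv_rhs => rw [← op_unop s, op_smul_eq_mul]
    rw [mul_assoc]



/-- Over a right Noetherian right fully bounded ring, a `q`-critical cyclic
right module with annihilator `q` is `C(q)`-torsion-free. -/
theorem stmt_14 {R : Type u} [Ring R] [IsNoetherian Rᵐᵒᵖ R]
    (hfb : RightFullyBounded R) (q : RightIdeal R) (hq : IsPrimeIdeal q)
    (W : Type u) [AddCommGroup W] [Module Rᵐᵒᵖ W] [Nontrivial W]
    (hcyc : ∃ w : W, (⊤ : Submodule Rᵐᵒᵖ W) = Submodule.span Rᵐᵒᵖ {w})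
    (hann : annSet R W = (q : Set R))
    (hkd : rKdim R W = rKdim R (R ⧸ q))
    (hcrit : ∀ N : Submodule Rᵐᵒᵖ W, N ≠ ⊥ → rKdim R (W ⧸ N) < rKdim R W) :
    ∀ w : W, w ≠ 0 → ∀ c ∈ CMod q, op c • w ≠ 0 := by
  intro w hw c hc hwc
  classical
  -- The map `a ↦ w·a`, its kernel `K`.
  set φ : R →ₗ[Rᵐᵒᵖ] W := rmulMap w with hφ
  set K : RightIdeal R := LinearMap.ker φ with hK
  have hannq : ∀ a : R, a ∈ q → ∀ x : W, op a • x = 0 := by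
    intro a ha x
    have : a ∈ annSet R W := by rw [hann]; exact ha
    exact this x
  have hqK : q ≤ K := by
    intro a ha
    exact LinearMap.mem_ker.mpr (hannq a ha w)
  have hcK : ∀ r : R, c * r ∈ K := by
    intro r
    refine LinearMap.mem_ker.mpr ?_
    show op (c * r) • w = 0
    rw [op_mul, mul_smul, hwc, smul_zero]
  have hK1 : (1 : R) ∉ K := by
    intro h
    apply hw
    have : op (1 : R) • w = 0 := LinearMap.mem_ker.mp h
    rwa [op_one, one_smul] at this
  -- The right ideal `E = q + cR ≤ K`.
  set E : RightIdeal R := q ⊔ LinearMap.range (lmulMap c) with hE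
  have hEK : E ≤ K := by
    refine sup_le hqK ?_
    rintro _ ⟨r, rfl⟩
    exact hcK r
  -- Powers of `c` are left regular modulo `q`.
  have hreg : ∀ n : ℕ, ∀ a : R, c ^ n * a ∈ q → a ∈ q := by
    intro n
    induction n with
    | zero => intro a ha; rwa [pow_zero, one_mul] at ha
    | succ n ih =>
      intro a ha
      rw [pow_succ, mul_assoc] at ha
      exact hc.1 a (ih (c * a) ha)
  -- The descending chain `C n = q + cⁿR`.
  set C : ℕ → RightIdeal R := fun n => q ⊔ LinearMap.range (lmulMap (c ^ n)) with hCdef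
  have hqC : ∀ n, q ≤ C n := fun n => le_sup_left
  have hCK : ∀ n, C (n + 1) ≤ K := by
    intro n
    refine sup_le hqK ?_
    rintro _ ⟨r, rfl⟩
    show c ^ (n + 1) * r ∈ K
    rw [pow_succ', mul_assoc]
    exact hcK _
  have hCdesc : ∀ n, C (n + 1) ≤ C n := by
    intro n
    refine sup_le le_sup_left ?_
    rintro _ ⟨r, rfl⟩
    refine Submodule.mem_sup_right ⟨c * r, ?_⟩
    show c ^ n * (c * r) = c ^ (n + 1) * r
    rw [← mul_assoc, ← pow_succ]
  -- `α = rKdim (R/q)`.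
  set α := rKdim R (R ⧸ q) with hα
  by_cases hne : {δ : Ordinal.{u} | DevLE δ (Submodule Rᵐᵒᵖ (R ⧸ q))}.Nonempty
  swap
  · -- If no ordinal bounds the deviation, `α = 0`, contradicting criticality at `⊤`.
    rw [Set.not_nonempty_iff_eq_empty] at hne
    have hα0 : α = 0 := by
      have h0 : sInf (∅ : Set Ordinal.{u}) = ⊥ := dif_neg Set.not_nonempty_empty
      rw [hα]
      show sInf {δ : Ordinal.{u} | DevLE δ (Submodule Rᵐᵒᵖ (R ⧸ q))} = 0
      rw [hne, h0]
      rfl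
    have htopbot : (⊤ : Submodule Rᵐᵒᵖ W) ≠ ⊥ := by
      intro htop
      obtain ⟨x, hx⟩ := exists_ne (0 : W)
      apply hx
      have hmem : x ∈ (⊤ : Submodule Rᵐᵒᵖ W) := Submodule.mem_top
      rw [htop] at hmem
      exact (Submodule.mem_bot _).mp hmem
    have hlt := hcrit ⊤ htopbot
    rw [hkd, hα0] at hlt
    exact absurd hlt (not_lt_of_ge zero_le)
  have hαdev : DevLE α (Submodule Rᵐᵒᵖ (R ⧸ q)) := csInf_mem hne
  -- Apply the deviation bound to the chain `n ↦ (q + cⁿR)/q`.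
  set f : ℕ → Submodule Rᵐᵒᵖ (R ⧸ q) := fun n => Submodule.map q.mkQ (C n) with hfdef
  have hfdesc : ∀ n, f (n + 1) ≤ f n := fun n => Submodule.map_mono (hCdesc n)
  have hαdev' := hαdev
  rw [DevLE_iff] at hαdev'
  obtain ⟨N₀, hN₀⟩ := hαdev' f hfdesc
  rcases hN₀ N₀ le_rfl with heq | ⟨γ, hγα, hγ⟩
  · -- The chain cannot stabilize: that would make `1 ∈ K` modulo regularity.
    exfalso
    have hCC : C (N₀ + 1) = C N₀ := by
      have h1 := congrArg (Submodule.comap q.mkQ) heq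
      rwa [Submodule.comap_map_eq, Submodule.comap_map_eq, Submodule.ker_mkQ,
        sup_eq_left.mpr (hqC _), sup_eq_left.mpr (hqC _)] at h1
    have hmem : c ^ N₀ ∈ C (N₀ + 1) := by
      rw [hCC]
      exact Submodule.mem_sup_right ⟨1, mul_one _⟩
    obtain ⟨s, hs, t, ht, hsum⟩ := Submodule.mem_sup.mp hmem
    obtain ⟨r, rfl⟩ := ht
    have hkey : c ^ N₀ * (1 - c * r) ∈ q := by
      have hexp : c ^ N₀ * (1 - c * r) = s := by
        have h2 : lmulMap (c ^ (N₀ + 1)) r = c ^ (N₀ + 1) * r := rfl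
        rw [h2] at hsum
        rw [mul_sub, mul_one, ← mul_assoc, ← pow_succ, ← hsum]
        abel
      rw [hexp]; exact hs
    have h1cr : 1 - c * r ∈ q := hreg _ _ hkey
    apply hK1
    have h1 : (1 : R) = (1 - c * r) + c * r := (sub_add_cancel 1 (c * r)).symm
    rw [h1]
    exact K.add_mem (hqK h1cr) (hcK r)
  · -- Transfer the small deviation bound of the interval to `Sub (R/E)`.
    exfalso
    have hEdev : DevLE γ (Submodule Rᵐᵒᵖ (R ⧸ E)) := by
      refine devle_transfer γ (fun D : Submodule Rᵐᵒᵖ (R ⧸ E) =>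
        (⟨Submodule.map q.mkQ
            (C (N₀ + 1) ⊔ Submodule.map (lmulMap (c ^ N₀)) (Submodule.comap E.mkQ D)),
          ?_, ?_⟩ : Set.Icc (f (N₀ + 1)) (f N₀))) ?_ ?_ hγ
      · exact Submodule.map_mono le_sup_left
      · refine Submodule.map_mono (sup_le (hCdesc N₀) ?_)
        rintro _ ⟨x, _, rfl⟩
        exact Submodule.mem_sup_right ⟨x, rfl⟩
      · intro D₁ D₂ hD
        exact Subtype.mk_le_mk.mpr (Submodule.map_mono (sup_le_sup_left
          (Submodule.map_mono (Submodule.comap_mono hD)) _))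
      · intro D₁ D₂ hD12 hΨ
        have hΨ' := congrArg Subtype.val hΨ
        simp only at hΨ'
        refine le_antisymm hD12 ?_
        intro y hy
        obtain ⟨x, rfl⟩ := E.mkQ_surjective y
        have hx2 : x ∈ Submodule.comap E.mkQ D₂ := hy
        have hmem2 : q.mkQ (c ^ N₀ * x) ∈ Submodule.map q.mkQ
            (C (N₀ + 1) ⊔ Submodule.map (lmulMap (c ^ N₀)) (Submodule.comap E.mkQ D₂)) :=
          Submodule.mem_map_of_mem (Submodule.mem_sup_right (Submodule.mem_map_of_mem hx2))
        rw [← hΨ'] at hmem2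
        obtain ⟨z, hz, hzq⟩ := hmem2
        obtain ⟨u, hu, v, hv, rfl⟩ := Submodule.mem_sup.mp hz
        obtain ⟨d, hd, rfl⟩ := hv
        obtain ⟨t, htq, _, ⟨r', rfl⟩, rfl⟩ := Submodule.mem_sup.mp hu
        have hdiff : (t + lmulMap (c ^ (N₀ + 1)) r' + lmulMap (c ^ N₀) d) - c ^ N₀ * x ∈ q :=
          (Submodule.Quotient.eq q).mp hzq
        have hkey : c ^ N₀ * (x - c * r' - d) ∈ q := by
          have hexp : c ^ N₀ * (x - c * r' - d) =
              -((t + lmulMap (c ^ (N₀ + 1)) r' + lmulMap (c ^ N₀) d) - c ^ N₀ * x) + t := by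
            have e1 : lmulMap (c ^ (N₀ + 1)) r' = c ^ N₀ * (c * r') := by
              show c ^ (N₀ + 1) * r' = _
              rw [← mul_assoc, ← pow_succ]
            have e2 : lmulMap (c ^ N₀) d = c ^ N₀ * d := rfl
            rw [e1, e2, mul_sub, mul_sub]
            abel
          rw [hexp]
          exact q.add_mem (q.neg_mem hdiff) htq
        have hxq : x - c * r' - d ∈ q := hreg _ _ hkey
        have hfinal : E.mkQ x = E.mkQ d := by
          rw [Submodule.mkQ_apply, Submodule.mkQ_apply, Submodule.Quotient.eq]
          rw [show (x : R) - d = (x - c * r' - d) + c * r' by abel]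
          exact E.add_mem (Submodule.mem_sup_left hxq) (Submodule.mem_sup_right ⟨r', rfl⟩)
        rw [hfinal]
        exact hd
    -- Transfer to `Sub (R/K)` and then to the submodule `N = wR ≤ W`.
    have hπEK : E ≤ Submodule.comap (LinearMap.id : R →ₗ[Rᵐᵒᵖ] R) K := by
      simpa using hEK
    set π : (R ⧸ E) →ₗ[Rᵐᵒᵖ] (R ⧸ K) := Submodule.mapQ E K LinearMap.id hπEK with hπ
    have hπsurj : Function.Surjective π := by
      intro y
      obtain ⟨x, rfl⟩ := K.mkQ_surjective y
      exact ⟨E.mkQ x, by simp [hπ, Submodule.mapQ_apply]⟩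
    have hKdev : DevLE γ (Submodule Rᵐᵒᵖ (R ⧸ K)) := devle_quot_transfer π hπsurj hEdev
    set Nsub : Submodule Rᵐᵒᵖ W := LinearMap.range φ with hNsub
    have hNdev : DevLE γ (Submodule Rᵐᵒᵖ Nsub) :=
      devle_equiv_transfer φ.quotKerEquivRange hKdev
    have hNbot : Nsub ≠ ⊥ := by
      intro h
      apply hw
      have hwN : w ∈ Nsub := ⟨1, by show op (1 : R) • w = w; rw [op_one, one_smul]⟩
      rw [h] at hwN
      simpa using hwN
    -- `W` is cyclic, so `Sub W` inherits the deviation bound `α` from `Sub (R/q)`.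
    obtain ⟨w₀, hw₀⟩ := hcyc
    set φ₀ : R →ₗ[Rᵐᵒᵖ] W := rmulMap w₀ with hφ₀
    have hsurj₀ : Function.Surjective φ₀ := by
      intro x
      have hx : x ∈ Submodule.span Rᵐᵒᵖ {w₀} := hw₀ ▸ Submodule.mem_top
      obtain ⟨r, rfl⟩ := Submodule.mem_span_singleton.mp hx
      exact ⟨r.unop, by show op (unop r) • w₀ = r • w₀; rw [op_unop]⟩
    have hqK₀ : q ≤ Submodule.comap (LinearMap.id : R →ₗ[Rᵐᵒᵖ] R) (LinearMap.ker φ₀) := by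
      intro a ha
      exact LinearMap.mem_ker.mpr (hannq a ha w₀)
    set π₀ : (R ⧸ q) →ₗ[Rᵐᵒᵖ] (R ⧸ LinearMap.ker φ₀) :=
      Submodule.mapQ q (LinearMap.ker φ₀) LinearMap.id hqK₀ with hπ₀
    have hπ₀surj : Function.Surjective π₀ := by
      intro y
      obtain ⟨x, rfl⟩ := (LinearMap.ker φ₀).mkQ_surjective y
      exact ⟨q.mkQ x, by simp [hπ₀, Submodule.mapQ_apply]⟩
    have hWdev : DevLE α (Submodule Rᵐᵒᵖ W) :=
      devle_equiv_transfer (φ₀.quotKerEquivOfSurjective hsurj₀)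
        (devle_quot_transfer π₀ hπ₀surj hαdev)
    have hWNdev : DevLE α (Submodule Rᵐᵒᵖ (W ⧸ Nsub)) :=
      devle_quot_transfer Nsub.mkQ Nsub.mkQ_surjective hWdev
    -- Criticality: the quotient has strictly smaller dimension, and it is attained.
    set γ' := rKdim R (W ⧸ Nsub) with hγ'
    have hγ'dev : DevLE γ' (Submodule Rᵐᵒᵖ (W ⧸ Nsub)) := by
      rw [hγ']
      exact csInf_mem (s := {δ : Ordinal.{u} | DevLE δ (Submodule Rᵐᵒᵖ (W ⧸ Nsub))}) ⟨α, hWNdev⟩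
    have hγ'α : γ' < α := by
      rw [← hkd]
      exact hcrit Nsub hNbot
    -- Exactness: `rKdim W ≤ max γ γ' < α = rKdim W`, a contradiction.
    have hδ : DevLE (max γ γ') (Submodule Rᵐᵒᵖ W) :=
      devle_exact Nsub (devle_mono (le_max_left _ _) hNdev)
        (devle_mono (le_max_right _ _) hγ'dev)
    have hle : rKdim R W ≤ max γ γ' := csInf_le' (s := {δ : Ordinal.{u} | DevLE δ (Submodule Rᵐᵒᵖ W)}) hδ
    have hlt : max γ γ' < rKdim R W := by
      rw [hkd]
      exact max_lt hγα hγ'α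
    exact absurd hle (not_le.mpr hlt)
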